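/- arXiv:2502.05059 — 5 statements merged into one kernel-verified Lean document; each statement's English description precedes it below -/
import Mathlib

section
/- Let T be a finite tree with root r and let S ⊆ V(T) ∖ {r} have characteristic (α, β) in (T, r). Then T − S has a unique minimum vertex cover if and only if either (α(0) < α(1) + 1 and β(0) = 1) or (α(1) + 1 < α(0) and β(1) = 1). -/
open Finset

variable {V : Type*}

/-- `M` is a vertex cover of `(T with vertex set A) − S`: `M ⊆ A \ S` and every
edge of `T` with both endpoints outside `S` has an endpoint in `M`. -/
def IsVCDel [DecidableEq V] (T : SimpleGraph V) (A S M : Finset V) : Prop :=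
  M ⊆ A \ S ∧ ∀ ⦃u v : V⦄, T.Adj u v → u ∉ S → v ∉ S → u ∈ M ∨ v ∈ M

/-- A vertex cover of type `i ∈ {0,1}` of `(T with vertex set A) − S`, relative
to the root `r`: type 1 covers contain `r`, type 0 covers do not. -/
def IsTypedVC [DecidableEq V] (T : SimpleGraph V) (A S : Finset V) (r : V) (i : Fin 2)
    (M : Finset V) : Prop :=
  IsVCDel T A S M ∧ (i = 1 ↔ r ∈ M)

/-- `(α, β)` is the characteristic of `S` in the rooted tree `(T, A, r)`:
for each `i ∈ {0,1}`, `α i` is the minimum reduced size `|M \ {r}|` of a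
vertex cover `M` of type `i` of `T − S`, and `β i = 1` iff there is exactly one
vertex cover of type `i` with reduced size `α i` (and `β i = 2` otherwise). -/
def IsCharacteristic [DecidableEq V] (T : SimpleGraph V) (A S : Finset V) (r : V)
    (α β : Fin 2 → ℕ) : Prop :=
  ∀ i : Fin 2,
    (∃ M, IsTypedVC T A S r i M ∧ (M.erase r).card = α i) ∧
    (∀ M, IsTypedVC T A S r i M → α i ≤ (M.erase r).card) ∧
    (β i = 1 ∨ β i = 2) ∧
    (β i = 1 ↔ ∃! M, IsTypedVC T A S r i M ∧ (M.erase r).card = α i)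

/-- `(T, A, r)` is a finite rooted tree: the root `r` lies in the vertex set `A`,
all edges of `T` are inside `A`, and the induced graph on `A` is a tree. -/
def IsRootedTree [DecidableEq V] (T : SimpleGraph V) (A : Finset V) (r : V) : Prop :=
  r ∈ A ∧ (∀ ⦃u v : V⦄, T.Adj u v → u ∈ A ∧ v ∈ A) ∧
    (SimpleGraph.induce (↑A : Set V) T).IsTree

/-- `(T with vertex set A) − S` has a unique minimum vertex cover. -/
def HasUniqueMinVC [DecidableEq V] (T : SimpleGraph V) (A S : Finset V) : Prop :=
  ∃! M : Finset V, IsVCDel T A S M ∧ ∀ M', IsVCDel T A S M' → M.card ≤ M'.card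

/-- For a rooted tree `(T, r)` and `S ⊆ V(T) \ {r}` with characteristic `(α, β)`,
`T − S` has a unique minimum vertex cover iff either `α 0 < α 1 + 1` and `β 0 = 1`,
or `α 1 + 1 < α 0` and `β 1 = 1`. -/
theorem uniqueMinVC_iff_of_char [Fintype V] [DecidableEq V]
    (T : SimpleGraph V) (A : Finset V) (r : V) (hT : IsRootedTree T A r)
    (S : Finset V) (hS : S ⊆ A.erase r)
    (α β : Fin 2 → ℕ) (hchar : IsCharacteristic T A S r α β) :
    HasUniqueMinVC T A S ↔
      (α 0 < α 1 + 1 ∧ β 0 = 1) ∨ (α 1 + 1 < α 0 ∧ β 1 = 1) := by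

  obtain ⟨⟨M0, hM0t, hM0c⟩, hmin0, hβ0or, hβ0iff⟩ := hchar 0
  obtain ⟨⟨M1, hM1t, hM1c⟩, hmin1, hβ1or, hβ1iff⟩ := hchar 1
  have hrM0 : r ∉ M0 := fun hh => absurd (hM0t.2.mpr hh) (by decide)
  have hrM1 : r ∈ M1 := hM1t.2.mp rfl
  have hM0card : M0.card = α 0 := by
    rw [← hM0c, Finset.erase_eq_of_notMem hrM0]
  have hM1card : M1.card = α 1 + 1 := by
    rw [← hM1c]; exact (Finset.card_erase_add_one hrM1).symm
  have typed0 : ∀ M, IsVCDel T A S M → r ∉ M → IsTypedVC T A S r 0 M := by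
    intro M hM hr
    exact ⟨hM, ⟨fun h => absurd h (by decide), fun h => absurd h hr⟩⟩
  have typed1 : ∀ M, IsVCDel T A S M → r ∈ M → IsTypedVC T A S r 1 M := by
    intro M hM hr
    exact ⟨hM, ⟨fun _ => hr, fun _ => rfl⟩⟩
  have hb0 : ∀ M, IsVCDel T A S M → r ∉ M → α 0 ≤ M.card := by
    intro M hM hr
    have := hmin0 M (typed0 M hM hr)
    rwa [Finset.erase_eq_of_notMem hr] at this
  have hb1 : ∀ M, IsVCDel T A S M → r ∈ M → α 1 + 1 ≤ M.card := by
    intro M hM hr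
    have h1 := hmin1 M (typed1 M hM hr)
    have h2 := Finset.card_erase_add_one hr
    omega
  have hminall : ∀ M', IsVCDel T A S M' → min (α 0) (α 1 + 1) ≤ M'.card := by
    intro M' hM'
    by_cases hr : r ∈ M'
    · exact le_trans (min_le_right _ _) (hb1 M' hM' hr)
    · exact le_trans (min_le_left _ _) (hb0 M' hM' hr)
  constructor
  · rintro ⟨M, ⟨hMvc, hMmin⟩, hMuniq⟩
    rcases lt_trichotomy (α 0) (α 1 + 1) with h | h | h
    · left
      refine ⟨h, hβ0iff.mpr ?_⟩
      have key : ∀ M', IsTypedVC T A S r 0 M' ∧ (M'.erase r).card = α 0 → M' = M := by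
        rintro M' ⟨hM't, hM'c⟩
        have hrM' : r ∉ M' := fun hh => absurd (hM't.2.mpr hh) (by decide)
        have hc : M'.card = α 0 := by rw [← hM'c, Finset.erase_eq_of_notMem hrM']
        apply hMuniq
        refine ⟨hM't.1, fun M'' hM'' => ?_⟩
        have := hminall M'' hM''
        have hm : min (α 0) (α 1 + 1) = α 0 := min_eq_left h.le
        omega
      exact ⟨M0, ⟨hM0t, hM0c⟩,
        fun M' hM' => (key M' hM').trans (key M0 ⟨hM0t, hM0c⟩).symm⟩
    · exfalso
      have hm : min (α 0) (α 1 + 1) = α 0 := min_eq_left h.le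
      have e0 : M0 = M := by
        apply hMuniq
        refine ⟨hM0t.1, fun M'' hM'' => ?_⟩
        have := hminall M'' hM''; omega
      have e1 : M1 = M := by
        apply hMuniq
        refine ⟨hM1t.1, fun M'' hM'' => ?_⟩
        have := hminall M'' hM''; omega
      exact hrM0 (e0 ▸ e1 ▸ hrM1)
    · right
      refine ⟨h, hβ1iff.mpr ?_⟩
      have key : ∀ M', IsTypedVC T A S r 1 M' ∧ (M'.erase r).card = α 1 → M' = M := by
        rintro M' ⟨hM't, hM'c⟩
        have hrM' : r ∈ M' := hM't.2.mp rfl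
        have hc : M'.card = α 1 + 1 := by
          have := Finset.card_erase_add_one hrM'; omega
        apply hMuniq
        refine ⟨hM't.1, fun M'' hM'' => ?_⟩
        have := hminall M'' hM''
        have hm : min (α 0) (α 1 + 1) = α 1 + 1 := min_eq_right h.le
        omega
      exact ⟨M1, ⟨hM1t, hM1c⟩,
        fun M' hM' => (key M' hM').trans (key M1 ⟨hM1t, hM1c⟩).symm⟩
  · rintro (⟨h, hβ⟩ | ⟨h, hβ⟩)
    · obtain ⟨M', ⟨hM't, hM'c⟩, huniq⟩ := hβ0iff.mp hβ
      have hrM' : r ∉ M' := fun hh => absurd (hM't.2.mpr hh) (by decide)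
      have hc : M'.card = α 0 := by rw [← hM'c, Finset.erase_eq_of_notMem hrM']
      refine ⟨M', ⟨hM't.1, fun M'' hM'' => ?_⟩, ?_⟩
      · have := hminall M'' hM''
        have hm : min (α 0) (α 1 + 1) = α 0 := min_eq_left h.le
        omega
      · rintro M'' ⟨hM''vc, hM''min⟩
        have hle : M''.card ≤ α 0 := hc ▸ hM''min M' hM't.1
        by_cases hr : r ∈ M''
        · have := hb1 M'' hM''vc hr; omega
        · have hge := hb0 M'' hM''vc hr
          have hec : (M''.erase r).card = α 0 := by
            rw [Finset.erase_eq_of_notMem hr]; omega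
          exact huniq M'' ⟨typed0 M'' hM''vc hr, hec⟩
    · obtain ⟨M', ⟨hM't, hM'c⟩, huniq⟩ := hβ1iff.mp hβ
      have hrM' : r ∈ M' := hM't.2.mp rfl
      have hc : M'.card = α 1 + 1 := by
        have := Finset.card_erase_add_one hrM'; omega
      refine ⟨M', ⟨hM't.1, fun M'' hM'' => ?_⟩, ?_⟩
      · have := hminall M'' hM''
        have hm : min (α 0) (α 1 + 1) = α 1 + 1 := min_eq_right h.le
        omega
      · rintro M'' ⟨hM''vc, hM''min⟩
        have hle : M''.card ≤ α 1 + 1 := hc ▸ hM''min M' hM't.1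
        by_cases hr : r ∈ M''
        · have hge := hb1 M'' hM''vc hr
          have hce := Finset.card_erase_add_one hr
          have hec : (M''.erase r).card = α 1 := by omega
          exact huniq M'' ⟨typed1 M'' hM''vc hr, hec⟩
        · have := hb0 M'' hM''vc hr; omega
end

section
/- Let (T₁, r) and (T₂, r) be finite rooted trees with V(T₁) ∩ V(T₂) = {r}, and let T be their union (so V(T) = V(T₁) ∪ V(T₂) and E(T) = E(T₁) ∪ E(T₂)), which is a tree rooted at r. Let S₁ ⊆ V(T₁) ∖ {r} have characteristic (α₁, β₁) in (T₁, r) and let S₂ ⊆ V(T₂) ∖ {r} have characteristic (α₂, β₂) in (T₂, r). Then the characteristic (α, β) of S₁ ∪ S₂ in (T, r) satisfies, for each i ∈ {0,1}: α(i) = α₁(i) + α₂(i), and β(i) = 1 if and only if β₁(i) = 1 and β₂(i) = 1. -/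
open Finset

variable {V : Type*}

/-- Join of two rooted trees sharing only the root `r`: the characteristic of
`S₁ ∪ S₂` in the union is obtained componentwise. -/
theorem char_join [Fintype V] [DecidableEq V]
    (T₁ T₂ : SimpleGraph V) (A₁ A₂ : Finset V) (r : V)
    (hT₁ : IsRootedTree T₁ A₁ r) (hT₂ : IsRootedTree T₂ A₂ r)
    (hInter : A₁ ∩ A₂ = {r})
    (S₁ S₂ : Finset V) (hS₁ : S₁ ⊆ A₁.erase r) (hS₂ : S₂ ⊆ A₂.erase r)
    (α₁ β₁ α₂ β₂ α β : Fin 2 → ℕ)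
    (h₁ : IsCharacteristic T₁ A₁ S₁ r α₁ β₁)
    (h₂ : IsCharacteristic T₂ A₂ S₂ r α₂ β₂)
    (h : IsCharacteristic (T₁ ⊔ T₂) (A₁ ∪ A₂) (S₁ ∪ S₂) r α β) :
    ∀ i : Fin 2, α i = α₁ i + α₂ i ∧ (β i = 1 ↔ β₁ i = 1 ∧ β₂ i = 1) := by
  obtain ⟨hr₁, hE₁, -⟩ := hT₁
  obtain ⟨hr₂, hE₂, -⟩ := hT₂
  have hmem : ∀ x, x ∈ A₁ → x ∈ A₂ → x = r := by
    intro x h1 h2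
    have : x ∈ A₁ ∩ A₂ := Finset.mem_inter.2 ⟨h1, h2⟩
    rwa [hInter, Finset.mem_singleton] at this
  have hS₂A₁ : ∀ x ∈ A₁, x ∉ S₂ := by
    intro x hx hxS
    obtain ⟨hne, hxA₂⟩ := Finset.mem_erase.1 (hS₂ hxS)
    exact hne (hmem x hx hxA₂)
  have hS₁A₂ : ∀ x ∈ A₂, x ∉ S₁ := by
    intro x hx hxS
    obtain ⟨hne, hxA₁⟩ := Finset.mem_erase.1 (hS₁ hxS)
    exact hne (hmem x hxA₁ hx)
  have hcard : ∀ M₁ M₂ : Finset V, M₁ ⊆ A₁ → M₂ ⊆ A₂ →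
      ((M₁ ∪ M₂).erase r).card = (M₁.erase r).card + (M₂.erase r).card := by
    intro M₁ M₂ h1 h2
    rw [Finset.erase_union_distrib, Finset.card_union_of_disjoint]
    rw [Finset.disjoint_left]
    intro x hx1 hx2
    obtain ⟨hne, hxM₁⟩ := Finset.mem_erase.1 hx1
    obtain ⟨-, hxM₂⟩ := Finset.mem_erase.1 hx2
    exact hne (hmem x (h1 hxM₁) (h2 hxM₂))
  have hsplit : ∀ (i : Fin 2) (M : Finset V),
      IsTypedVC (T₁ ⊔ T₂) (A₁ ∪ A₂) (S₁ ∪ S₂) r i M →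
      IsTypedVC T₁ A₁ S₁ r i (M ∩ A₁) ∧ IsTypedVC T₂ A₂ S₂ r i (M ∩ A₂) ∧
        (M ∩ A₁) ∪ (M ∩ A₂) = M := by
    intro i M ⟨⟨hsub, hcov⟩, htype⟩
    have hMS : ∀ x ∈ M, x ∉ S₁ ∪ S₂ := fun x hx => (Finset.mem_sdiff.1 (hsub hx)).2
    have hMA : ∀ x ∈ M, x ∈ A₁ ∪ A₂ := fun x hx => (Finset.mem_sdiff.1 (hsub hx)).1
    refine ⟨⟨⟨?_, ?_⟩, ?_⟩, ⟨⟨?_, ?_⟩, ?_⟩, ?_⟩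
    · intro x hx
      obtain ⟨hxM, hxA⟩ := Finset.mem_inter.1 hx
      exact Finset.mem_sdiff.2 ⟨hxA, fun hs => hMS x hxM (Finset.mem_union_left _ hs)⟩
    · intro u v huv hu hv
      obtain ⟨huA, hvA⟩ := hE₁ huv
      have hu' : u ∉ S₁ ∪ S₂ := by
        simp only [Finset.mem_union, not_or]; exact ⟨hu, hS₂A₁ u huA⟩
      have hv' : v ∉ S₁ ∪ S₂ := by
        simp only [Finset.mem_union, not_or]; exact ⟨hv, hS₂A₁ v hvA⟩
      rcases hcov (Or.inl huv) hu' hv' with hm | hm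
      · exact Or.inl (Finset.mem_inter.2 ⟨hm, huA⟩)
      · exact Or.inr (Finset.mem_inter.2 ⟨hm, hvA⟩)
    · rw [Finset.mem_inter]
      constructor
      · intro hi; exact ⟨htype.1 hi, hr₁⟩
      · intro ⟨hm, _⟩; exact htype.2 hm
    · intro x hx
      obtain ⟨hxM, hxA⟩ := Finset.mem_inter.1 hx
      exact Finset.mem_sdiff.2 ⟨hxA, fun hs => hMS x hxM (Finset.mem_union_right _ hs)⟩
    · intro u v huv hu hv
      obtain ⟨huA, hvA⟩ := hE₂ huv
      have hu' : u ∉ S₁ ∪ S₂ := by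
        simp only [Finset.mem_union, not_or]; exact ⟨hS₁A₂ u huA, hu⟩
      have hv' : v ∉ S₁ ∪ S₂ := by
        simp only [Finset.mem_union, not_or]; exact ⟨hS₁A₂ v hvA, hv⟩
      rcases hcov (Or.inr huv) hu' hv' with hm | hm
      · exact Or.inl (Finset.mem_inter.2 ⟨hm, huA⟩)
      · exact Or.inr (Finset.mem_inter.2 ⟨hm, hvA⟩)
    · rw [Finset.mem_inter]
      constructor
      · intro hi; exact ⟨htype.1 hi, hr₂⟩
      · intro ⟨hm, _⟩; exact htype.2 hm
    · rw [← Finset.inter_union_distrib_left]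
      exact Finset.inter_eq_left.2 hMA
  have hjoin : ∀ (i : Fin 2) (M₁ M₂ : Finset V),
      IsTypedVC T₁ A₁ S₁ r i M₁ → IsTypedVC T₂ A₂ S₂ r i M₂ →
      IsTypedVC (T₁ ⊔ T₂) (A₁ ∪ A₂) (S₁ ∪ S₂) r i (M₁ ∪ M₂) ∧
        (M₁ ∪ M₂) ∩ A₁ = M₁ ∧ (M₁ ∪ M₂) ∩ A₂ = M₂ := by
    intro i M₁ M₂ ⟨⟨hsub₁, hcov₁⟩, ht₁⟩ ⟨⟨hsub₂, hcov₂⟩, ht₂⟩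
    have hM₁A : M₁ ⊆ A₁ := fun x hx => (Finset.mem_sdiff.1 (hsub₁ hx)).1
    have hM₂A : M₂ ⊆ A₂ := fun x hx => (Finset.mem_sdiff.1 (hsub₂ hx)).1
    have hM₁S : ∀ x ∈ M₁, x ∉ S₁ := fun x hx => (Finset.mem_sdiff.1 (hsub₁ hx)).2
    have hM₂S : ∀ x ∈ M₂, x ∉ S₂ := fun x hx => (Finset.mem_sdiff.1 (hsub₂ hx)).2
    refine ⟨⟨⟨?_, ?_⟩, ?_⟩, ?_, ?_⟩
    · intro x hx
      rw [Finset.mem_sdiff]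
      rcases Finset.mem_union.1 hx with hx | hx
      · refine ⟨Finset.mem_union_left _ (hM₁A hx), ?_⟩
        simp only [Finset.mem_union, not_or]
        exact ⟨hM₁S x hx, hS₂A₁ x (hM₁A hx)⟩
      · refine ⟨Finset.mem_union_right _ (hM₂A hx), ?_⟩
        simp only [Finset.mem_union, not_or]
        exact ⟨hS₁A₂ x (hM₂A hx), hM₂S x hx⟩
    · intro u v huv hu hv
      simp only [Finset.mem_union, not_or] at hu hv
      rcases huv with huv | huv
      · rcases hcov₁ huv hu.1 hv.1 with hm | hm
        · exact Or.inl (Finset.mem_union_left _ hm)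
        · exact Or.inr (Finset.mem_union_left _ hm)
      · rcases hcov₂ huv hu.2 hv.2 with hm | hm
        · exact Or.inl (Finset.mem_union_right _ hm)
        · exact Or.inr (Finset.mem_union_right _ hm)
    · rw [Finset.mem_union]
      constructor
      · intro hi; exact Or.inl (ht₁.1 hi)
      · rintro (hm | hm)
        · exact ht₁.2 hm
        · exact ht₂.2 hm
    · apply Finset.Subset.antisymm
      · intro x hx
        obtain ⟨hxM, hxA⟩ := Finset.mem_inter.1 hx
        rcases Finset.mem_union.1 hxM with hx1 | hx2
        · exact hx1
        · have hxr : x = r := hmem x hxA (hM₂A hx2)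
          subst hxr
          exact ht₁.1 (ht₂.2 hx2)
      · exact fun x hx => Finset.mem_inter.2 ⟨Finset.mem_union_left _ hx, hM₁A hx⟩
    · apply Finset.Subset.antisymm
      · intro x hx
        obtain ⟨hxM, hxA⟩ := Finset.mem_inter.1 hx
        rcases Finset.mem_union.1 hxM with hx1 | hx2
        · have hxr : x = r := hmem x (hM₁A hx1) hxA
          subst hxr
          exact ht₂.1 (ht₁.2 hx1)
        · exact hx2
      · exact fun x hx => Finset.mem_inter.2 ⟨Finset.mem_union_right _ hx, hM₂A hx⟩
  intro i
  obtain ⟨⟨N, hN, hNc⟩, hmin, hβor, hβiff⟩ := h i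
  obtain ⟨⟨N₁, hN₁, hN₁c⟩, hmin₁, hβor₁, hβiff₁⟩ := h₁ i
  obtain ⟨⟨N₂, hN₂, hN₂c⟩, hmin₂, hβor₂, hβiff₂⟩ := h₂ i
  have hMsub : ∀ M : Finset V, IsTypedVC (T₁ ⊔ T₂) (A₁ ∪ A₂) (S₁ ∪ S₂) r i M →
      M ∩ A₁ ⊆ A₁ ∧ M ∩ A₂ ⊆ A₂ := fun M _ =>
    ⟨Finset.inter_subset_right, Finset.inter_subset_right⟩
  have hsubA₁ : ∀ M : Finset V, IsTypedVC T₁ A₁ S₁ r i M → M ⊆ A₁ := by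
    intro M hM x hx
    exact (Finset.mem_sdiff.1 (hM.1.1 hx)).1
  have hsubA₂ : ∀ M : Finset V, IsTypedVC T₂ A₂ S₂ r i M → M ⊆ A₂ := by
    intro M hM x hx
    exact (Finset.mem_sdiff.1 (hM.1.1 hx)).1
  -- α i = α₁ i + α₂ i
  have hαle : α i ≤ α₁ i + α₂ i := by
    obtain ⟨hU, -, -⟩ := hjoin i N₁ N₂ hN₁ hN₂
    calc α i ≤ ((N₁ ∪ N₂).erase r).card := hmin _ hU
      _ = α₁ i + α₂ i := by
        rw [hcard N₁ N₂ (hsubA₁ _ hN₁) (hsubA₂ _ hN₂), hN₁c, hN₂c]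
  have hαge : α₁ i + α₂ i ≤ α i := by
    obtain ⟨hT1, hT2, hU⟩ := hsplit i N hN
    have := hcard (N ∩ A₁) (N ∩ A₂) Finset.inter_subset_right Finset.inter_subset_right
    rw [hU, hNc] at this
    calc α₁ i + α₂ i ≤ ((N ∩ A₁).erase r).card + ((N ∩ A₂).erase r).card :=
          Nat.add_le_add (hmin₁ _ hT1) (hmin₂ _ hT2)
      _ = α i := this.symm
  have hα : α i = α₁ i + α₂ i := le_antisymm hαle hαge
  refine ⟨hα, ?_⟩
  -- key: splitting a minimizer gives minimizers
  have hsplitmin : ∀ M : Finset V,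
      IsTypedVC (T₁ ⊔ T₂) (A₁ ∪ A₂) (S₁ ∪ S₂) r i M → (M.erase r).card = α i →
      (IsTypedVC T₁ A₁ S₁ r i (M ∩ A₁) ∧ ((M ∩ A₁).erase r).card = α₁ i) ∧
      (IsTypedVC T₂ A₂ S₂ r i (M ∩ A₂) ∧ ((M ∩ A₂).erase r).card = α₂ i) := by
    intro M hM hMc
    obtain ⟨hT1, hT2, hU⟩ := hsplit i M hM
    have hcc := hcard (M ∩ A₁) (M ∩ A₂) Finset.inter_subset_right Finset.inter_subset_right
    rw [hU, hMc, hα] at hcc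
    have h1 := hmin₁ _ hT1
    have h2 := hmin₂ _ hT2
    have e1 : ((M ∩ A₁).erase r).card = α₁ i := by omega
    have e2 : ((M ∩ A₂).erase r).card = α₂ i := by omega
    exact ⟨⟨hT1, e1⟩, ⟨hT2, e2⟩⟩
  have hjoinmin : ∀ M₁ M₂ : Finset V,
      IsTypedVC T₁ A₁ S₁ r i M₁ → (M₁.erase r).card = α₁ i →
      IsTypedVC T₂ A₂ S₂ r i M₂ → (M₂.erase r).card = α₂ i →
      IsTypedVC (T₁ ⊔ T₂) (A₁ ∪ A₂) (S₁ ∪ S₂) r i (M₁ ∪ M₂) ∧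
        ((M₁ ∪ M₂).erase r).card = α i := by
    intro M₁ M₂ hM₁ hc₁ hM₂ hc₂
    obtain ⟨hU, -, -⟩ := hjoin i M₁ M₂ hM₁ hM₂
    refine ⟨hU, ?_⟩
    rw [hcard M₁ M₂ (hsubA₁ _ hM₁) (hsubA₂ _ hM₂), hc₁, hc₂, hα]
  constructor
  · intro hβ
    obtain ⟨M, hM, hMuniq⟩ := hβiff.1 hβ
    obtain ⟨⟨hT1, hc1⟩, ⟨hT2, hc2⟩⟩ := hsplitmin M hM.1 hM.2
    constructor
    · refine hβiff₁.2 ⟨M ∩ A₁, ⟨hT1, hc1⟩, ?_⟩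
      intro M₁' ⟨hM₁', hc₁'⟩
      obtain ⟨hU, hi1, -⟩ := hjoin i M₁' (M ∩ A₂) hM₁' hT2
      have hUc : ((M₁' ∪ M ∩ A₂).erase r).card = α i :=
        (hjoinmin M₁' (M ∩ A₂) hM₁' hc₁' hT2 hc2).2
      have := hMuniq _ ⟨hU, hUc⟩
      rw [← hi1, this]
    · refine hβiff₂.2 ⟨M ∩ A₂, ⟨hT2, hc2⟩, ?_⟩
      intro M₂' ⟨hM₂', hc₂'⟩
      obtain ⟨hU, -, hi2⟩ := hjoin i (M ∩ A₁) M₂' hT1 hM₂'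
      have hUc : ((M ∩ A₁ ∪ M₂').erase r).card = α i :=
        (hjoinmin (M ∩ A₁) M₂' hT1 hc1 hM₂' hc₂').2
      have := hMuniq _ ⟨hU, hUc⟩
      rw [← hi2, this]
  · rintro ⟨hβ₁, hβ₂⟩
    obtain ⟨M₁, hM₁, hM₁u⟩ := hβiff₁.1 hβ₁
    obtain ⟨M₂, hM₂, hM₂u⟩ := hβiff₂.1 hβ₂
    refine hβiff.2 ⟨M₁ ∪ M₂, hjoinmin M₁ M₂ hM₁.1 hM₁.2 hM₂.1 hM₂.2, ?_⟩
    intro M ⟨hM, hMc⟩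
    obtain ⟨⟨hT1, hc1⟩, ⟨hT2, hc2⟩⟩ := hsplitmin M hM hMc
    have e1 : M ∩ A₁ = M₁ := hM₁u _ ⟨hT1, hc1⟩
    have e2 : M ∩ A₂ = M₂ := hM₂u _ ⟨hT2, hc2⟩
    have hU := (hsplit i M hM).2.2
    rw [← hU, e1, e2]
end

section
/- Let (T', r') be a finite rooted tree, let r ∉ V(T'), and let T be the tree obtained from T' by adding the new vertex r and the edge {r, r'}, rooted at r. Let S ⊆ V(T') ∖ {r'} have characteristic (α', β') in (T', r'). Then the characteristic (α, β) of S in (T, r) satisfies: α(0) = α'(1) + 1; α(1) = min(α'(0), α'(1) + 1); β(0) = β'(1); and β(1) = β'(0) if α'(0) < α'(1) + 1, β(1) = β'(1) if α'(0) > α'(1) + 1, and β(1) = 2 if α'(0) = α'(1) + 1. -/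
open Finset

variable {V : Type*}

/-- Extend operation: the characteristic of `S` in the tree obtained from
`(T', r')` by adding a new root `r` joined to `r'` by an edge. -/
theorem char_extend_id [Fintype V] [DecidableEq V]
    (T' : SimpleGraph V) (A' : Finset V) (r' : V) (hT' : IsRootedTree T' A' r')
    (r : V) (hr : r ∉ A')
    (S : Finset V) (hS : S ⊆ A'.erase r')
    (α' β' α β : Fin 2 → ℕ)
    (h' : IsCharacteristic T' A' S r' α' β')
    (h : IsCharacteristic (T' ⊔ SimpleGraph.fromEdgeSet {s(r, r')})
          (insert r A') S r α β) :
    α 0 = α' 1 + 1 ∧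
    α 1 = min (α' 0) (α' 1 + 1) ∧
    β 0 = β' 1 ∧
    (α' 0 < α' 1 + 1 → β 1 = β' 0) ∧
    (α' 1 + 1 < α' 0 → β 1 = β' 1) ∧
    (α' 0 = α' 1 + 1 → β 1 = 2) := by
  obtain ⟨hr'A, hedge, -⟩ := hT'
  set T : SimpleGraph V := T' ⊔ SimpleGraph.fromEdgeSet {s(r, r')} with hTdef
  have hne : r ≠ r' := fun hh => hr (hh ▸ hr'A)
  have hrS : r ∉ S := fun hh => hr (mem_of_mem_erase (hS hh))
  have hr'S : r' ∉ S := fun hh => (notMem_erase r' A') (hS hh)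
  have hradj : ∀ {u v : V}, T'.Adj u v → u ≠ r ∧ v ≠ r := by
    intro u v huv
    obtain ⟨hu, hv⟩ := hedge huv
    exact ⟨fun e => hr (e ▸ hu), fun e => hr (e ▸ hv)⟩
  have adj_ext : ∀ {u v : V}, T.Adj u v ↔
      T'.Adj u v ∨ (u = r ∧ v = r') ∨ (u = r' ∧ v = r) := by
    intro u v
    simp only [hTdef, SimpleGraph.sup_adj, SimpleGraph.fromEdgeSet_adj,
      Set.mem_singleton_iff, Sym2.eq_iff]
    constructor
    · rintro (hh | ⟨hh, -⟩)
      · exact Or.inl hh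
      · exact Or.inr hh
    · rintro (hh | ⟨rfl, rfl⟩ | ⟨rfl, rfl⟩)
      · exact Or.inl hh
      · exact Or.inr ⟨Or.inl ⟨rfl, rfl⟩, hne⟩
      · exact Or.inr ⟨Or.inr ⟨rfl, rfl⟩, hne.symm⟩
  have hsub : ∀ {M : Finset V}, M ⊆ A' \ S → M ⊆ insert r A' \ S := by
    intro M hM x hx
    obtain ⟨h1, h2⟩ := mem_sdiff.mp (hM hx)
    exact mem_sdiff.mpr ⟨mem_insert_of_mem h1, h2⟩
  -- type-0 covers of T correspond to type-1 covers of T'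
  have key0 : ∀ M : Finset V,
      IsTypedVC T (insert r A') S r 0 M ↔ IsTypedVC T' A' S r' 1 M := by
    intro M
    constructor
    · rintro ⟨⟨hMsub, hMcov⟩, hiff⟩
      have hrM : r ∉ M := fun hm => absurd (hiff.mpr hm) (by decide)
      have hr'M : r' ∈ M := by
        rcases hMcov (adj_ext.mpr (Or.inr (Or.inl ⟨rfl, rfl⟩))) hrS hr'S with hh | hh
        · exact absurd hh hrM
        · exact hh
      refine ⟨⟨fun x hx => ?_, fun u v huv hu hv => ?_⟩, by simp [hr'M]⟩
      · obtain ⟨h1, h2⟩ := mem_sdiff.mp (hMsub hx)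
        rcases mem_insert.mp h1 with rfl | h1
        · exact absurd hx hrM
        · exact mem_sdiff.mpr ⟨h1, h2⟩
      · exact hMcov (adj_ext.mpr (Or.inl huv)) hu hv
    · rintro ⟨⟨hMsub, hMcov⟩, hiff⟩
      have hr'M : r' ∈ M := hiff.mp rfl
      have hrM : r ∉ M := fun hm => hr (mem_sdiff.mp (hMsub hm)).1
      refine ⟨⟨hsub hMsub, fun u v huv hu hv => ?_⟩, iff_of_false (by decide) hrM⟩
      rcases adj_ext.mp huv with hh | ⟨rfl, rfl⟩ | ⟨rfl, rfl⟩
      · exact hMcov hh hu hv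
      · exact Or.inr hr'M
      · exact Or.inl hr'M
  -- type-1 covers of T correspond to arbitrary covers of T'
  have key1 : ∀ M : Finset V,
      IsTypedVC T (insert r A') S r 1 M ↔ r ∈ M ∧ IsVCDel T' A' S (M.erase r) := by
    intro M
    constructor
    · rintro ⟨⟨hMsub, hMcov⟩, hiff⟩
      have hrM : r ∈ M := hiff.mp rfl
      refine ⟨hrM, fun x hx => ?_, fun u v huv hu hv => ?_⟩
      · obtain ⟨hxr, hxM⟩ := mem_erase.mp hx
        obtain ⟨h1, h2⟩ := mem_sdiff.mp (hMsub hxM)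
        rcases mem_insert.mp h1 with rfl | h1
        · exact absurd rfl hxr
        · exact mem_sdiff.mpr ⟨h1, h2⟩
      · obtain ⟨hur, hvr⟩ := hradj huv
        rcases hMcov (adj_ext.mpr (Or.inl huv)) hu hv with hh | hh
        · exact Or.inl (mem_erase.mpr ⟨hur, hh⟩)
        · exact Or.inr (mem_erase.mpr ⟨hvr, hh⟩)
    · rintro ⟨hrM, hNsub, hNcov⟩
      refine ⟨⟨fun x hx => ?_, fun u v huv hu hv => ?_⟩, by simp [hrM]⟩
      · by_cases hxr : x = r
        · subst hxr; exact mem_sdiff.mpr ⟨mem_insert_self _ _, hrS⟩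
        · exact hsub hNsub (mem_erase.mpr ⟨hxr, hx⟩)
      · rcases adj_ext.mp huv with hh | ⟨rfl, rfl⟩ | ⟨rfl, rfl⟩
        · rcases hNcov hh hu hv with hh2 | hh2
          · exact Or.inl (mem_of_mem_erase hh2)
          · exact Or.inr (mem_of_mem_erase hh2)
        · exact Or.inl hrM
        · exact Or.inr hrM
  -- cards for type-1 T' covers
  have card1' : ∀ {M : Finset V}, IsTypedVC T' A' S r' 1 M →
      r' ∈ M ∧ r ∉ M ∧ (M.erase r).card = (M.erase r').card + 1 := by
    rintro M ⟨⟨hMsub, -⟩, hiff⟩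
    have hr'M : r' ∈ M := hiff.mp rfl
    have hrM : r ∉ M := fun hm => hr (mem_sdiff.mp (hMsub hm)).1
    rw [erase_eq_of_notMem hrM, card_erase_add_one hr'M]
    exact ⟨hr'M, hrM, rfl⟩
  have card0' : ∀ {M : Finset V}, IsTypedVC T' A' S r' 0 M →
      r' ∉ M ∧ r ∉ M ∧ (M.erase r').card = M.card := by
    rintro M ⟨⟨hMsub, -⟩, hiff⟩
    have hr'M : r' ∉ M := fun hm => absurd (hiff.mpr hm) (by decide)
    have hrM : r ∉ M := fun hm => hr (mem_sdiff.mp (hMsub hm)).1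
    rw [erase_eq_of_notMem hr'M]
    exact ⟨hr'M, hrM, rfl⟩
  obtain ⟨⟨M0', hM0', hc0'⟩, hmin0', hβ0', hu0'⟩ := h' 0
  obtain ⟨⟨M1', hM1', hc1'⟩, hmin1', hβ1', hu1'⟩ := h' 1
  obtain ⟨⟨N0, hN0, hc0⟩, hmin0, hβ0, hu0⟩ := h 0
  obtain ⟨⟨N1, hN1, hc1⟩, hmin1, hβ1, hu1⟩ := h 1
  -- untyped cover lower bound
  have untyped_lb : ∀ N : Finset V, IsVCDel T' A' S N →
      min (α' 0) (α' 1 + 1) ≤ N.card := by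
    intro N hN
    by_cases hr'N : r' ∈ N
    · have ht : IsTypedVC T' A' S r' 1 N := ⟨hN, by simp [hr'N]⟩
      have := hmin1' N ht
      have hc := card_erase_add_one hr'N
      omega
    · have ht : IsTypedVC T' A' S r' 0 N := ⟨hN, iff_of_false (by decide) hr'N⟩
      have := hmin0' N ht
      rw [erase_eq_of_notMem hr'N] at this
      omega
  -- Goal 1 : α 0 = α' 1 + 1
  have G1 : α 0 = α' 1 + 1 := by
    have h1 : IsTypedVC T' A' S r' 1 N0 := (key0 N0).mp hN0
    obtain ⟨-, -, hcc⟩ := card1' h1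
    have lb := hmin1' N0 h1
    have h2 : IsTypedVC T (insert r A') S r 0 M1' := (key0 M1').mpr hM1'
    obtain ⟨-, -, hcc2⟩ := card1' hM1'
    have ub := hmin0 M1' h2
    omega
  -- Goal 2 : α 1 = min (α' 0) (α' 1 + 1)
  have ins_typed : ∀ {N : Finset V}, r ∉ N → IsVCDel T' A' S N →
      IsTypedVC T (insert r A') S r 1 (insert r N) ∧
        ((insert r N).erase r).card = N.card := by
    intro N hrN hN
    have he : (insert r N).erase r = N := by
      rw [erase_insert hrN]
    refine ⟨(key1 _).mpr ⟨mem_insert_self _ _, ?_⟩, by rw [he]⟩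
    rw [he]; exact hN
  have G2 : α 1 = min (α' 0) (α' 1 + 1) := by
    obtain ⟨hr'0, hr0, hcc0⟩ := card0' hM0'
    obtain ⟨hI0, hIc0⟩ := ins_typed hr0 hM0'.1
    have ub0 := hmin1 _ hI0
    obtain ⟨hr'1, hr1, hcc1⟩ := card1' hM1'
    obtain ⟨hI1, hIc1⟩ := ins_typed hr1 hM1'.1
    have ub1 := hmin1 _ hI1
    have hc1e : (M1'.erase r).card = (M1'.erase r').card + 1 := hcc1
    rw [erase_eq_of_notMem hr1] at hc1e
    -- lower bound from N1
    obtain ⟨hrN1, hVCN1⟩ := (key1 N1).mp hN1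
    have lb := untyped_lb _ hVCN1
    have : (N1.erase r).card = N1.card - 1 := by rw [card_erase_of_mem hrN1]
    have hN1pos : 1 ≤ N1.card := card_pos.mpr ⟨r, hrN1⟩
    omega
  have finish12 : ∀ {a b : ℕ}, (a = 1 ∨ a = 2) → (b = 1 ∨ b = 2) → (a = 1 ↔ b = 1) → a = b := by
    intro a b ha hb hab
    rcases ha with rfl | rfl <;> rcases hb with rfl | rfl <;> simp_all
  refine ⟨G1, G2, ?_, ?_, ?_, ?_⟩
  -- Goal 3 : β 0 = β' 1
  · have hiff : (∃! M, IsTypedVC T (insert r A') S r 0 M ∧ (M.erase r).card = α 0) ↔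
        (∃! M, IsTypedVC T' A' S r' 1 M ∧ (M.erase r').card = α' 1) := by
      apply existsUnique_congr
      intro M
      constructor
      · rintro ⟨hM, hc⟩
        have h1 := (key0 M).mp hM
        obtain ⟨-, -, hcc⟩ := card1' h1
        exact ⟨h1, by omega⟩
      · rintro ⟨hM, hc⟩
        obtain ⟨-, -, hcc⟩ := card1' hM
        exact ⟨(key0 M).mpr hM, by omega⟩
    exact finish12 hβ0 hβ1' (by rw [hu0, hu1']; exact hiff)
  -- Goal 4 : α' 0 < α' 1 + 1 → β 1 = β' 0
  · intro hlt
    have hα1 : α 1 = α' 0 := by omega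
    have hiff : (∃! M, IsTypedVC T (insert r A') S r 1 M ∧ (M.erase r).card = α 1) ↔
        (∃! N, IsTypedVC T' A' S r' 0 N ∧ (N.erase r').card = α' 0) := by
      constructor
      · rintro ⟨M, ⟨hM, hc⟩, huniq⟩
        obtain ⟨hrM, hVC⟩ := (key1 M).mp hM
        have hQ : IsTypedVC T' A' S r' 0 (M.erase r) ∧ ((M.erase r).erase r').card = α' 0 := by
          by_cases hr'N : r' ∈ M.erase r
          · exfalso
            have ht : IsTypedVC T' A' S r' 1 (M.erase r) := ⟨hVC, by simp [hr'N]⟩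
            have := hmin1' _ ht
            have := card_erase_add_one hr'N
            omega
          · have ht : IsTypedVC T' A' S r' 0 (M.erase r) := ⟨hVC, iff_of_false (by decide) hr'N⟩
            have := hmin0' _ ht
            rw [erase_eq_of_notMem hr'N] at this ⊢
            exact ⟨ht, by omega⟩
        refine ⟨M.erase r, hQ, ?_⟩
        rintro N ⟨hN, hcN⟩
        obtain ⟨hr'N, hrN, hccN⟩ := card0' hN
        obtain ⟨hI, hIc⟩ := ins_typed hrN hN.1
        have := huniq (insert r N) ⟨hI, by omega⟩
        rw [← this, erase_insert hrN]
      · rintro ⟨N, ⟨hN, hcN⟩, huniq⟩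
        obtain ⟨hr'N, hrN, hccN⟩ := card0' hN
        obtain ⟨hI, hIc⟩ := ins_typed hrN hN.1
        refine ⟨insert r N, ⟨hI, by omega⟩, ?_⟩
        rintro M ⟨hM, hc⟩
        obtain ⟨hrM, hVC⟩ := (key1 M).mp hM
        have hQ : IsTypedVC T' A' S r' 0 (M.erase r) ∧ ((M.erase r).erase r').card = α' 0 := by
          by_cases hr'M : r' ∈ M.erase r
          · exfalso
            have ht : IsTypedVC T' A' S r' 1 (M.erase r) := ⟨hVC, by simp [hr'M]⟩
            have := hmin1' _ ht
            have := card_erase_add_one hr'M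
            omega
          · have ht : IsTypedVC T' A' S r' 0 (M.erase r) := ⟨hVC, iff_of_false (by decide) hr'M⟩
            have := hmin0' _ ht
            rw [erase_eq_of_notMem hr'M] at this ⊢
            exact ⟨ht, by omega⟩
        have := huniq (M.erase r) hQ
        rw [← this, insert_erase hrM]
    exact finish12 hβ1 hβ0' (by rw [hu1, hu0']; exact hiff)
  -- Goal 5 : α' 1 + 1 < α' 0 → β 1 = β' 1
  · intro hlt
    have hα1 : α 1 = α' 1 + 1 := by omega
    have hiff : (∃! M, IsTypedVC T (insert r A') S r 1 M ∧ (M.erase r).card = α 1) ↔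
        (∃! N, IsTypedVC T' A' S r' 1 N ∧ (N.erase r').card = α' 1) := by
      have step : ∀ M : Finset V, IsTypedVC T (insert r A') S r 1 M → (M.erase r).card = α 1 →
          IsTypedVC T' A' S r' 1 (M.erase r) ∧ ((M.erase r).erase r').card = α' 1 := by
        intro M hM hc
        obtain ⟨hrM, hVC⟩ := (key1 M).mp hM
        by_cases hr'M : r' ∈ M.erase r
        · have ht : IsTypedVC T' A' S r' 1 (M.erase r) := ⟨hVC, by simp [hr'M]⟩
          have := hmin1' _ ht
          have := card_erase_add_one hr'M
          exact ⟨ht, by omega⟩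
        · exfalso
          have ht : IsTypedVC T' A' S r' 0 (M.erase r) := ⟨hVC, iff_of_false (by decide) hr'M⟩
          have := hmin0' _ ht
          rw [erase_eq_of_notMem hr'M] at this
          omega
      constructor
      · rintro ⟨M, ⟨hM, hc⟩, huniq⟩
        refine ⟨M.erase r, step M hM hc, ?_⟩
        rintro N ⟨hN, hcN⟩
        obtain ⟨hr'N, hrN, hccN⟩ := card1' hN
        rw [erase_eq_of_notMem hrN] at hccN
        obtain ⟨hI, hIc⟩ := ins_typed hrN hN.1
        have := huniq (insert r N) ⟨hI, by omega⟩
        rw [← this, erase_insert hrN]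
      · rintro ⟨N, ⟨hN, hcN⟩, huniq⟩
        obtain ⟨hr'N, hrN, hccN⟩ := card1' hN
        rw [erase_eq_of_notMem hrN] at hccN
        obtain ⟨hI, hIc⟩ := ins_typed hrN hN.1
        refine ⟨insert r N, ⟨hI, by omega⟩, ?_⟩
        rintro M ⟨hM, hc⟩
        have hrM : r ∈ M := ((key1 M).mp hM).1
        have := huniq (M.erase r) (step M hM hc)
        rw [← this, insert_erase hrM]
    exact finish12 hβ1 hβ1' (by rw [hu1, hu1']; exact hiff)
  -- Goal 6 : α' 0 = α' 1 + 1 → β 1 = 2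
  · intro heq
    have hα1 : α 1 = α' 0 := by omega
    obtain ⟨hr'0, hr0, hcc0⟩ := card0' hM0'
    obtain ⟨hI0, hIc0⟩ := ins_typed hr0 hM0'.1
    obtain ⟨hr'1, hr1, hcc1⟩ := card1' hM1'
    rw [erase_eq_of_notMem hr1] at hcc1
    obtain ⟨hI1, hIc1⟩ := ins_typed hr1 hM1'.1
    have hne01 : insert r M0' ≠ insert r M1' := by
      intro e
      have : r' ∈ insert r M0' := e ▸ mem_insert_of_mem hr'1
      rcases mem_insert.mp this with e2 | e2
      · exact hne e2.symm
      · exact hr'0 e2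
    have : ¬ ∃! M, IsTypedVC T (insert r A') S r 1 M ∧ (M.erase r).card = α 1 := by
      rintro ⟨M, -, huniq⟩
      have e0 := huniq (insert r M0') ⟨hI0, by omega⟩
      have e1 := huniq (insert r M1') ⟨hI1, by omega⟩
      exact hne01 (e0.trans e1.symm)
    rcases hβ1 with e | e
    · exact absurd (hu1.mp e) this
    · exact e
end

section
/- Let (T', r') be a finite rooted tree, let r ∉ V(T'), and let T be the tree obtained from T' by adding the new vertex r and the edge {r, r'}, rooted at r. Let S ⊆ V(T') ∖ {r'} have characteristic (α', β') in (T', r'). Then the characteristic (α, β) of S ∪ {r'} in (T, r) satisfies α(0) = α(1) = α'(1) and β(0) = β(1) = β'(1). -/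
open Finset

variable {V : Type*}

/-- Extend operation, adding the old root `r'` to the deleted set: the
characteristic of `S ∪ {r'}` in the tree obtained from `(T', r')` by adding a
new root `r` joined to `r'` by an edge. -/
theorem char_extend_plus [Fintype V] [DecidableEq V]
    (T' : SimpleGraph V) (A' : Finset V) (r' : V) (hT' : IsRootedTree T' A' r')
    (r : V) (hr : r ∉ A')
    (S : Finset V) (hS : S ⊆ A'.erase r')
    (α' β' α β : Fin 2 → ℕ)
    (h' : IsCharacteristic T' A' S r' α' β')
    (h : IsCharacteristic (T' ⊔ SimpleGraph.fromEdgeSet {s(r, r')})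
          (insert r A') (insert r' S) r α β) :
    α 0 = α' 1 ∧ α 1 = α' 1 ∧ β 0 = β' 1 ∧ β 1 = β' 1 := by
  classical
  obtain ⟨hr'A, hedge, -⟩ := hT'
  have hr'S : r' ∉ S := fun h0 => (Finset.mem_erase.mp (hS h0)).1 rfl
  have hSA : S ⊆ A' := fun x hx => (Finset.mem_erase.mp (hS hx)).2
  have hrne : r ≠ r' := fun h0 => hr (h0 ▸ hr'A)
  have hrS : r ∉ S := fun h0 => hr (hSA h0)
  set G := T' ⊔ SimpleGraph.fromEdgeSet {s(r, r')} with hGdef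
  have hrM : ∀ N, IsTypedVC T' A' S r' 1 N → r ∉ N := by
    rintro N ⟨⟨hsub, -⟩, -⟩ hmem
    exact hr (Finset.mem_sdiff.mp (hsub hmem)).1
  have hr'inM : ∀ N, IsTypedVC T' A' S r' 1 N → r' ∈ N := by
    rintro N ⟨-, ht⟩
    exact ht.mp rfl
  have hr'notM : ∀ (i : Fin 2) M, IsTypedVC G (insert r A') (insert r' S) r i M → r' ∉ M := by
    rintro i M ⟨⟨hsub, -⟩, -⟩ hmem
    exact (Finset.mem_sdiff.mp (hsub hmem)).2 (Finset.mem_insert_self _ _)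
  -- forward map: M ↦ insert r' (M.erase r)
  have fwd : ∀ (i : Fin 2) (M : Finset V),
      IsTypedVC G (insert r A') (insert r' S) r i M →
      IsTypedVC T' A' S r' 1 (insert r' (M.erase r)) := by
    rintro i M ⟨⟨hsub, hcov⟩, -⟩
    refine ⟨⟨?_, ?_⟩, by simp⟩
    · intro x hx
      rcases Finset.mem_insert.mp hx with rfl | hx
      · exact Finset.mem_sdiff.mpr ⟨hr'A, hr'S⟩
      · have hxr := Finset.mem_erase.mp hx
        have h2 := Finset.mem_sdiff.mp (hsub hxr.2)
        rcases Finset.mem_insert.mp h2.1 with rfl | hxA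
        · exact absurd rfl hxr.1
        · exact Finset.mem_sdiff.mpr ⟨hxA, fun hxS => h2.2 (Finset.mem_insert_of_mem hxS)⟩
    · intro u v huv hu hv
      by_cases hu' : u = r'
      · exact Or.inl (hu' ▸ Finset.mem_insert_self _ _)
      by_cases hv' : v = r'
      · exact Or.inr (hv' ▸ Finset.mem_insert_self _ _)
      have hG : G.Adj u v := (le_sup_left : T' ≤ G) huv
      have hu2 : u ∉ insert r' S := by simp [hu', hu]
      have hv2 : v ∉ insert r' S := by simp [hv', hv]
      have hur : u ≠ r := fun h0 => hr (h0 ▸ (hedge huv).1)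
      have hvr : v ≠ r := fun h0 => hr (h0 ▸ (hedge huv).2)
      rcases hcov hG hu2 hv2 with hM | hM
      · exact Or.inl (Finset.mem_insert_of_mem (Finset.mem_erase.mpr ⟨hur, hM⟩))
      · exact Or.inr (Finset.mem_insert_of_mem (Finset.mem_erase.mpr ⟨hvr, hM⟩))
  -- backward map: N ↦ if i = 1 then insert r (N.erase r') else N.erase r'
  have bwd : ∀ (i : Fin 2) (N : Finset V), IsTypedVC T' A' S r' 1 N →
      IsTypedVC G (insert r A') (insert r' S) r i
        (if i = 1 then insert r (N.erase r') else N.erase r') := by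
    rintro i N hN
    obtain ⟨⟨hsub, hcov⟩, -⟩ := hN
    have hsub0 : N.erase r' ⊆ insert r A' \ insert r' S := by
      intro x hx
      have hxr := Finset.mem_erase.mp hx
      have h2 := Finset.mem_sdiff.mp (hsub hxr.2)
      exact Finset.mem_sdiff.mpr ⟨Finset.mem_insert_of_mem h2.1, by simp [hxr.1, h2.2]⟩
    have hcov0 : ∀ ⦃u v : V⦄, G.Adj u v → u ∉ insert r' S → v ∉ insert r' S →
        u ∈ N.erase r' ∨ v ∈ N.erase r' := by
      intro u v huv hu hv
      have hu' : u ≠ r' := fun h0 => hu (h0 ▸ Finset.mem_insert_self _ _)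
      have hv' : v ≠ r' := fun h0 => hv (h0 ▸ Finset.mem_insert_self _ _)
      have huS : u ∉ S := fun h0 => hu (Finset.mem_insert_of_mem h0)
      have hvS : v ∉ S := fun h0 => hv (Finset.mem_insert_of_mem h0)
      have hT : T'.Adj u v := by
        have huv' : T'.Adj u v ∨ (s(u, v) = s(r, r') ∧ u ≠ v) := by
          simpa [hGdef, SimpleGraph.fromEdgeSet_adj] using huv
        rcases huv' with h1 | ⟨h1, -⟩
        · exact h1
        · rcases Sym2.eq_iff.mp h1 with ⟨rfl, rfl⟩ | ⟨rfl, rfl⟩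
          · exact absurd rfl hv'
          · exact absurd rfl hu'
      rcases hcov hT huS hvS with hM | hM
      · exact Or.inl (Finset.mem_erase.mpr ⟨hu', hM⟩)
      · exact Or.inr (Finset.mem_erase.mpr ⟨hv', hM⟩)
    by_cases hi : i = 1
    · subst hi
      rw [if_pos rfl]
      refine ⟨⟨fun x hx => ?_, fun u v huv hu hv => ?_⟩, by simp⟩
      · rcases Finset.mem_insert.mp hx with rfl | hx
        · exact Finset.mem_sdiff.mpr ⟨Finset.mem_insert_self _ _, by simp [hrne, hrS]⟩
        · exact hsub0 hx
      · rcases hcov0 huv hu hv with hM | hM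
        · exact Or.inl (Finset.mem_insert_of_mem hM)
        · exact Or.inr (Finset.mem_insert_of_mem hM)
    · rw [if_neg hi]
      refine ⟨⟨hsub0, hcov0⟩, ⟨fun h0 => absurd h0 hi, fun h0 => ?_⟩⟩
      have hrN : r ∈ N := (Finset.mem_erase.mp h0).2
      exact absurd (Finset.mem_sdiff.mp (hsub hrN)).1 hr
  have cardΦ : ∀ (i : Fin 2) M, IsTypedVC G (insert r A') (insert r' S) r i M →
      ((insert r' (M.erase r)).erase r').card = (M.erase r).card := by
    intro i M hM
    rw [Finset.erase_insert (fun h0 => hr'notM i M hM (Finset.mem_of_mem_erase h0))]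
  have cardΨ : ∀ (i : Fin 2) N, IsTypedVC T' A' S r' 1 N →
      ((if i = 1 then insert r (N.erase r') else N.erase r').erase r).card
        = (N.erase r').card := by
    intro i N hN
    have hrN : r ∉ N.erase r' := fun h0 => hrM N hN (Finset.mem_of_mem_erase h0)
    by_cases hi : i = 1
    · rw [if_pos hi, Finset.erase_insert hrN]
    · rw [if_neg hi, Finset.erase_eq_of_notMem hrN]
  have hΨΦ : ∀ (i : Fin 2) M, IsTypedVC G (insert r A') (insert r' S) r i M →
      (if i = 1 then insert r ((insert r' (M.erase r)).erase r')
       else (insert r' (M.erase r)).erase r') = M := by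
    intro i M hM
    have h1 : (insert r' (M.erase r)).erase r' = M.erase r :=
      Finset.erase_insert (fun h0 => hr'notM i M hM (Finset.mem_of_mem_erase h0))
    by_cases hi : i = 1
    · rw [if_pos hi, h1, Finset.insert_erase (hM.2.mp hi)]
    · rw [if_neg hi, h1, Finset.erase_eq_of_notMem (fun h0 => hi (hM.2.mpr h0))]
  have hΦΨ : ∀ (i : Fin 2) N, IsTypedVC T' A' S r' 1 N →
      insert r' ((if i = 1 then insert r (N.erase r') else N.erase r').erase r) = N := by
    intro i N hN
    have hrN : r ∉ N.erase r' := fun h0 => hrM N hN (Finset.mem_of_mem_erase h0)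
    by_cases hi : i = 1
    · rw [if_pos hi, Finset.erase_insert hrN, Finset.insert_erase (hr'inM N hN)]
    · rw [if_neg hi, Finset.erase_eq_of_notMem hrN, Finset.insert_erase (hr'inM N hN)]
  have hα : ∀ i : Fin 2, α i = α' 1 := by
    intro i
    obtain ⟨M, hM, hMc⟩ := (h i).1
    obtain ⟨N, hN, hNc⟩ := (h' 1).1
    refine le_antisymm ?_ ?_
    · calc α i ≤ _ := (h i).2.1 _ (bwd i N hN)
        _ = α' 1 := by rw [cardΨ i N hN, hNc]
    · calc α' 1 ≤ _ := (h' 1).2.1 _ (fwd i M hM)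
        _ = α i := by rw [cardΦ i M hM, hMc]
  have hβ : ∀ i : Fin 2, β i = β' 1 := by
    intro i
    have hiff : (∃! M, IsTypedVC G (insert r A') (insert r' S) r i M ∧ (M.erase r).card = α i)
        ↔ (∃! N, IsTypedVC T' A' S r' 1 N ∧ (N.erase r').card = α' 1) := by
      constructor
      · rintro ⟨M, ⟨hM, hMc⟩, huniq⟩
        refine ⟨insert r' (M.erase r), ⟨fwd i M hM, by rw [cardΦ i M hM, hMc, hα i]⟩, ?_⟩
        rintro N' ⟨hN', hNc'⟩
        have hq := huniq _ ⟨bwd i N' hN', by rw [cardΨ i N' hN', hNc', hα i]⟩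
        rw [← hΦΨ i N' hN', hq]
      · rintro ⟨N, ⟨hN, hNc⟩, huniq⟩
        refine ⟨_, ⟨bwd i N hN, by rw [cardΨ i N hN, hNc, hα i]⟩, ?_⟩
        rintro M' ⟨hM', hMc'⟩
        have hq := huniq _ ⟨fwd i M' hM', by rw [cardΦ i M' hM', hMc', hα i]⟩
        rw [← hΨΦ i M' hM', hq]
    have e : β i = 1 ↔ β' 1 = 1 := by
      rw [((h i).2.2).2, ((h' 1).2.2).2]; exact hiff
    rcases ((h i).2.2).1 with e1 | e1 <;> rcases ((h' 1).2.2).1 with e2 | e2 <;> omega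
  exact ⟨hα 0, hα 1, hβ 0, hβ 1⟩
end

section
/- Let (T₁, r) and (T₂, r) be finite rooted trees with V(T₁) ∩ V(T₂) = {r}, and let T be their union, rooted at r. Let S₁ ⊆ V(T₁) ∖ {r} have reduced characteristic (δ₁, β₁) in (T₁, r) and let S₂ ⊆ V(T₂) ∖ {r} have reduced characteristic (δ₂, β₂) in (T₂, r). Then the reduced characteristic (δ, β) of S₁ ∪ S₂ in (T, r) satisfies δ = min(2, δ₁ + δ₂) and, for each i ∈ {0,1}, β(i) = 1 if and only if β₁(i) = 1 and β₂(i) = 1. -/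
open Finset

variable {V : Type*}

/-- `(δ, β)` is the reduced characteristic of `S` in the rooted tree `(T, A, r)`:
`δ = min 2 (α 0 - α 1)` where `(α, β)` is the characteristic of `S`. -/
def IsReducedCharacteristic [DecidableEq V] (T : SimpleGraph V) (A S : Finset V) (r : V)
    (δ : ℕ) (β : Fin 2 → ℕ) : Prop :=
  ∃ α : Fin 2 → ℕ, IsCharacteristic T A S r α β ∧ δ = min 2 (α 0 - α 1)


section Aux

variable [DecidableEq V] {T₁ T₂ : SimpleGraph V} {A₁ A₂ : Finset V} {r : V}
  {S₁ S₂ : Finset V}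

/-- A vertex in `A₁` that avoids the root cannot lie in `S₂`. -/
lemma notMem_other (hInter : A₁ ∩ A₂ = {r}) (hS₂ : S₂ ⊆ A₂.erase r)
    {x : V} (hx : x ∈ A₁) : x ∉ S₂ := by
  intro hxS
  have h := hS₂ hxS
  rw [Finset.mem_erase] at h
  have : x ∈ A₁ ∩ A₂ := Finset.mem_inter.2 ⟨hx, h.2⟩
  rw [hInter, Finset.mem_singleton] at this
  exact h.1 this

lemma erase_card_split {M : Finset V} (hInter : A₁ ∩ A₂ = {r}) (hM : M ⊆ A₁ ∪ A₂) :
    (M.erase r).card = ((M ∩ A₁).erase r).card + ((M ∩ A₂).erase r).card := by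
  rw [← Finset.card_union_of_disjoint]
  · congr 1
    ext x
    simp only [Finset.mem_erase, Finset.mem_union, Finset.mem_inter]
    constructor
    · rintro ⟨hx, hxM⟩
      rcases Finset.mem_union.1 (hM hxM) with h | h
      · exact Or.inl ⟨hx, hxM, h⟩
      · exact Or.inr ⟨hx, hxM, h⟩
    · rintro (⟨hx, hxM, _⟩ | ⟨hx, hxM, _⟩) <;> exact ⟨hx, hxM⟩
  · rw [Finset.disjoint_left]
    rintro x hx hx'
    simp only [Finset.mem_erase, Finset.mem_inter] at hx hx'
    have : x ∈ A₁ ∩ A₂ := Finset.mem_inter.2 ⟨hx.2.2, hx'.2.2⟩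
    rw [hInter, Finset.mem_singleton] at this
    exact hx.1 this

/-- The left component of a typed vertex cover of the union. -/
lemma typedVC_inter_left
    (hE₁ : ∀ ⦃u v : V⦄, T₁.Adj u v → u ∈ A₁ ∧ v ∈ A₁)
    (hInter : A₁ ∩ A₂ = {r}) (hS₂ : S₂ ⊆ A₂.erase r) (hr₁ : r ∈ A₁)
    {i : Fin 2} {M : Finset V}
    (hM : IsTypedVC (T₁ ⊔ T₂) (A₁ ∪ A₂) (S₁ ∪ S₂) r i M) :
    IsTypedVC T₁ A₁ S₁ r i (M ∩ A₁) := by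
  obtain ⟨⟨hsub, hcov⟩, hri⟩ := hM
  refine ⟨⟨?_, ?_⟩, ?_⟩
  · intro x hx
    rw [Finset.mem_inter] at hx
    have h := hsub hx.1
    rw [Finset.mem_sdiff, Finset.mem_union] at h
    exact Finset.mem_sdiff.2 ⟨hx.2, fun hxS => h.2 (Finset.mem_union_left _ hxS)⟩
  · intro u v huv hu hv
    have hu2 : u ∉ S₁ ∪ S₂ := by
      rw [Finset.mem_union]
      rintro (hh | hh)
      · exact hu hh
      · exact notMem_other hInter hS₂ (hE₁ huv).1 hh
    have hv2 : v ∉ S₁ ∪ S₂ := by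
      rw [Finset.mem_union]
      rintro (hh | hh)
      · exact hv hh
      · exact notMem_other hInter hS₂ (hE₁ huv).2 hh
    rcases hcov (Or.inl huv) hu2 hv2 with hh | hh
    · exact Or.inl (Finset.mem_inter.2 ⟨hh, (hE₁ huv).1⟩)
    · exact Or.inr (Finset.mem_inter.2 ⟨hh, (hE₁ huv).2⟩)
  · rw [Finset.mem_inter]
    constructor
    · intro hi; exact ⟨hri.1 hi, hr₁⟩
    · intro hh; exact hri.2 hh.1

/-- The right component of a typed vertex cover of the union. -/
lemma typedVC_inter_right
    (hE₂ : ∀ ⦃u v : V⦄, T₂.Adj u v → u ∈ A₂ ∧ v ∈ A₂)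
    (hInter : A₁ ∩ A₂ = {r}) (hS₁ : S₁ ⊆ A₁.erase r) (hr₂ : r ∈ A₂)
    {i : Fin 2} {M : Finset V}
    (hM : IsTypedVC (T₁ ⊔ T₂) (A₁ ∪ A₂) (S₁ ∪ S₂) r i M) :
    IsTypedVC T₂ A₂ S₂ r i (M ∩ A₂) := by
  obtain ⟨⟨hsub, hcov⟩, hri⟩ := hM
  have hInter' : A₂ ∩ A₁ = {r} := by rw [Finset.inter_comm]; exact hInter
  refine ⟨⟨?_, ?_⟩, ?_⟩
  · intro x hx
    rw [Finset.mem_inter] at hx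
    have h := hsub hx.1
    rw [Finset.mem_sdiff, Finset.mem_union] at h
    exact Finset.mem_sdiff.2 ⟨hx.2, fun hxS => h.2 (Finset.mem_union_right _ hxS)⟩
  · intro u v huv hu hv
    have hu2 : u ∉ S₁ ∪ S₂ := by
      rw [Finset.mem_union]
      rintro (hh | hh)
      · exact notMem_other hInter' hS₁ (hE₂ huv).1 hh
      · exact hu hh
    have hv2 : v ∉ S₁ ∪ S₂ := by
      rw [Finset.mem_union]
      rintro (hh | hh)
      · exact notMem_other hInter' hS₁ (hE₂ huv).2 hh
      · exact hv hh
    rcases hcov (Or.inr huv) hu2 hv2 with hh | hh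
    · exact Or.inl (Finset.mem_inter.2 ⟨hh, (hE₂ huv).1⟩)
    · exact Or.inr (Finset.mem_inter.2 ⟨hh, (hE₂ huv).2⟩)
  · rw [Finset.mem_inter]
    constructor
    · intro hi; exact ⟨hri.1 hi, hr₂⟩
    · intro hh; exact hri.2 hh.1

/-- Joining typed vertex covers of the two trees gives one for the union. -/
lemma typedVC_union (hInter : A₁ ∩ A₂ = {r})
    (hS₁ : S₁ ⊆ A₁.erase r) (hS₂ : S₂ ⊆ A₂.erase r)
    {i : Fin 2} {M₁ M₂ : Finset V}
    (h1 : IsTypedVC T₁ A₁ S₁ r i M₁) (h2 : IsTypedVC T₂ A₂ S₂ r i M₂) :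
    IsTypedVC (T₁ ⊔ T₂) (A₁ ∪ A₂) (S₁ ∪ S₂) r i (M₁ ∪ M₂) := by
  obtain ⟨⟨hsub1, hcov1⟩, hri1⟩ := h1
  obtain ⟨⟨hsub2, hcov2⟩, hri2⟩ := h2
  have hInter' : A₂ ∩ A₁ = {r} := by rw [Finset.inter_comm]; exact hInter
  refine ⟨⟨?_, ?_⟩, ?_⟩
  · intro x hx
    rw [Finset.mem_union] at hx
    rw [Finset.mem_sdiff, Finset.mem_union, Finset.mem_union]
    rcases hx with hx | hx
    · have h := Finset.mem_sdiff.1 (hsub1 hx)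
      refine ⟨Or.inl h.1, ?_⟩
      rintro (hh | hh)
      · exact h.2 hh
      · exact notMem_other hInter hS₂ h.1 hh
    · have h := Finset.mem_sdiff.1 (hsub2 hx)
      refine ⟨Or.inr h.1, ?_⟩
      rintro (hh | hh)
      · exact notMem_other hInter' hS₁ h.1 hh
      · exact h.2 hh
  · intro u v huv hu hv
    rw [Finset.mem_union] at hu hv
    push_neg at hu hv
    rcases huv with huv | huv
    · rcases hcov1 huv hu.1 hv.1 with hh | hh
      · exact Or.inl (Finset.mem_union_left _ hh)
      · exact Or.inr (Finset.mem_union_left _ hh)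
    · rcases hcov2 huv hu.2 hv.2 with hh | hh
      · exact Or.inl (Finset.mem_union_right _ hh)
      · exact Or.inr (Finset.mem_union_right _ hh)
  · rw [Finset.mem_union]
    constructor
    · intro hi; exact Or.inl (hri1.1 hi)
    · rintro (hh | hh)
      · exact hri1.2 hh
      · exact hri2.2 hh

lemma union_card_split (hInter : A₁ ∩ A₂ = {r})
    {M₁ M₂ : Finset V} (h1 : M₁ ⊆ A₁ \ S₁) (h2 : M₂ ⊆ A₂ \ S₂) :
    ((M₁ ∪ M₂).erase r).card = (M₁.erase r).card + (M₂.erase r).card := by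
  rw [Finset.erase_union_distrib, Finset.card_union_of_disjoint]
  rw [Finset.disjoint_left]
  intro x hx hx'
  rw [Finset.mem_erase] at hx hx'
  have h1' := Finset.mem_sdiff.1 (h1 hx.2)
  have h2' := Finset.mem_sdiff.1 (h2 hx'.2)
  have : x ∈ A₁ ∩ A₂ := Finset.mem_inter.2 ⟨h1'.1, h2'.1⟩
  rw [hInter, Finset.mem_singleton] at this
  exact hx.1 this

/-- Intersecting a joined cover with `A₁` recovers the left piece. -/
lemma union_inter_left (hInter : A₁ ∩ A₂ = {r})
    {i : Fin 2} {M₁ M₂ : Finset V}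
    (h1 : IsTypedVC T₁ A₁ S₁ r i M₁) (h2 : IsTypedVC T₂ A₂ S₂ r i M₂) :
    (M₁ ∪ M₂) ∩ A₁ = M₁ := by
  ext x
  simp only [Finset.mem_inter, Finset.mem_union]
  constructor
  · rintro ⟨hx | hx, hxA⟩
    · exact hx
    · have h := Finset.mem_sdiff.1 (h2.1.1 hx)
      have : x ∈ A₁ ∩ A₂ := Finset.mem_inter.2 ⟨hxA, h.1⟩
      rw [hInter, Finset.mem_singleton] at this
      subst this
      exact h1.2.1 (h2.2.2 hx)
  · intro hx
    exact ⟨Or.inl hx, (Finset.mem_sdiff.1 (h1.1.1 hx)).1⟩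

lemma union_inter_right (hInter : A₁ ∩ A₂ = {r})
    {i : Fin 2} {M₁ M₂ : Finset V}
    (h1 : IsTypedVC T₁ A₁ S₁ r i M₁) (h2 : IsTypedVC T₂ A₂ S₂ r i M₂) :
    (M₁ ∪ M₂) ∩ A₂ = M₂ := by
  ext x
  simp only [Finset.mem_inter, Finset.mem_union]
  constructor
  · rintro ⟨hx | hx, hxA⟩
    · have h := Finset.mem_sdiff.1 (h1.1.1 hx)
      have : x ∈ A₁ ∩ A₂ := Finset.mem_inter.2 ⟨h.1, hxA⟩
      rw [hInter, Finset.mem_singleton] at this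
      subst this
      exact h2.2.1 (h1.2.2 hx)
    · exact hx
  · intro hx
    exact ⟨Or.inr hx, (Finset.mem_sdiff.1 (h2.1.1 hx)).1⟩

/-- `α 1 ≤ α 0` for any characteristic. -/
lemma alpha_one_le_zero {T : SimpleGraph V} {A S : Finset V}
    (hr : r ∈ A) (hS : S ⊆ A.erase r) {α β : Fin 2 → ℕ}
    (hc : IsCharacteristic T A S r α β) : α 1 ≤ α 0 := by
  obtain ⟨M, ⟨⟨hsub, hcov⟩, hri⟩, hcard⟩ := (hc 0).1
  have hrM : r ∉ M := fun hh => absurd (hri.2 hh) (by decide)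
  have hrS : r ∉ S := fun hh => (Finset.mem_erase.1 (hS hh)).1 rfl
  have htyped : IsTypedVC T A S r 1 (insert r M) := by
    refine ⟨⟨?_, ?_⟩, ?_⟩
    · intro x hx
      rcases Finset.mem_insert.1 hx with hh | hh
      · subst hh; exact Finset.mem_sdiff.2 ⟨hr, hrS⟩
      · exact hsub hh
    · intro u v huv hu hv
      rcases hcov huv hu hv with hh | hh
      · exact Or.inl (Finset.mem_insert_of_mem hh)
      · exact Or.inr (Finset.mem_insert_of_mem hh)
    · simp
  have := (hc 1).2.1 _ htyped
  calc α 1 ≤ ((insert r M).erase r).card := this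
    _ = α 0 := by rw [Finset.erase_insert hrM, ← hcard, Finset.erase_eq_of_notMem hrM]

end Aux

/-- Join of two rooted trees sharing only the root `r`: the reduced
characteristic of `S₁ ∪ S₂` in the union. -/
theorem reduced_char_join [Fintype V] [DecidableEq V]
    (T₁ T₂ : SimpleGraph V) (A₁ A₂ : Finset V) (r : V)
    (hT₁ : IsRootedTree T₁ A₁ r) (hT₂ : IsRootedTree T₂ A₂ r)
    (hInter : A₁ ∩ A₂ = {r})
    (S₁ S₂ : Finset V) (hS₁ : S₁ ⊆ A₁.erase r) (hS₂ : S₂ ⊆ A₂.erase r)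
    (δ₁ δ₂ δ : ℕ) (β₁ β₂ β : Fin 2 → ℕ)
    (h₁ : IsReducedCharacteristic T₁ A₁ S₁ r δ₁ β₁)
    (h₂ : IsReducedCharacteristic T₂ A₂ S₂ r δ₂ β₂)
    (h : IsReducedCharacteristic (T₁ ⊔ T₂) (A₁ ∪ A₂) (S₁ ∪ S₂) r δ β) :
    δ = min 2 (δ₁ + δ₂) ∧ ∀ i : Fin 2, (β i = 1 ↔ β₁ i = 1 ∧ β₂ i = 1) := by
  obtain ⟨α₁, hc₁, hδ₁⟩ := h₁
  obtain ⟨α₂, hc₂, hδ₂⟩ := h₂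
  obtain ⟨α, hc, hδ⟩ := h
  obtain ⟨hr₁, hE₁, -⟩ := hT₁
  obtain ⟨hr₂, hE₂, -⟩ := hT₂
  -- Each typed VC of the union splits; sums of typed VCs join.
  have key : ∀ i : Fin 2, α i = α₁ i + α₂ i := by
    intro i
    obtain ⟨M₁, hM₁, hcard₁⟩ := (hc₁ i).1
    obtain ⟨M₂, hM₂, hcard₂⟩ := (hc₂ i).1
    have hle : α i ≤ α₁ i + α₂ i := by
      have hu := typedVC_union hInter hS₁ hS₂ hM₁ hM₂
      have := (hc i).2.1 _ hu
      rwa [union_card_split hInter hM₁.1.1 hM₂.1.1, hcard₁, hcard₂] at this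
    have hge : α₁ i + α₂ i ≤ α i := by
      obtain ⟨M, hM, hcard⟩ := (hc i).1
      have hsub : M ⊆ A₁ ∪ A₂ := fun x hx => (Finset.mem_sdiff.1 (hM.1.1 hx)).1
      have h1 := (hc₁ i).2.1 _ (typedVC_inter_left hE₁ hInter hS₂ hr₁ hM)
      have h2 := (hc₂ i).2.1 _ (typedVC_inter_right hE₂ hInter hS₁ hr₂ hM)
      have := erase_card_split hInter hsub
      omega
    omega
  constructor
  · have m1 := alpha_one_le_zero hr₁ hS₁ hc₁
    have m2 := alpha_one_le_zero hr₂ hS₂ hc₂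
    rw [hδ, hδ₁, hδ₂, key 0, key 1]
    omega
  · intro i
    rw [(hc i).2.2.2, (hc₁ i).2.2.2, (hc₂ i).2.2.2]
    constructor
    · rintro ⟨M, hM, hU⟩
      obtain ⟨N₂, hN₂⟩ := (hc₂ i).1
      obtain ⟨N₁, hN₁⟩ := (hc₁ i).1
      constructor
      · refine ⟨N₁, hN₁, fun P₁ hP₁ => ?_⟩
        have j1 : IsTypedVC (T₁ ⊔ T₂) (A₁ ∪ A₂) (S₁ ∪ S₂) r i (P₁ ∪ N₂) ∧
            ((P₁ ∪ N₂).erase r).card = α i := by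
          refine ⟨typedVC_union hInter hS₁ hS₂ hP₁.1 hN₂.1, ?_⟩
          rw [union_card_split hInter hP₁.1.1.1 hN₂.1.1.1, hP₁.2, hN₂.2, key i]
        have j2 : IsTypedVC (T₁ ⊔ T₂) (A₁ ∪ A₂) (S₁ ∪ S₂) r i (N₁ ∪ N₂) ∧
            ((N₁ ∪ N₂).erase r).card = α i := by
          refine ⟨typedVC_union hInter hS₁ hS₂ hN₁.1 hN₂.1, ?_⟩
          rw [union_card_split hInter hN₁.1.1.1 hN₂.1.1.1, hN₁.2, hN₂.2, key i]
        have := (hU _ j1).trans (hU _ j2).symm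
        calc P₁ = (P₁ ∪ N₂) ∩ A₁ := (union_inter_left hInter hP₁.1 hN₂.1).symm
          _ = (N₁ ∪ N₂) ∩ A₁ := by rw [this]
          _ = N₁ := union_inter_left hInter hN₁.1 hN₂.1
      · refine ⟨N₂, hN₂, fun P₂ hP₂ => ?_⟩
        have j1 : IsTypedVC (T₁ ⊔ T₂) (A₁ ∪ A₂) (S₁ ∪ S₂) r i (N₁ ∪ P₂) ∧
            ((N₁ ∪ P₂).erase r).card = α i := by
          refine ⟨typedVC_union hInter hS₁ hS₂ hN₁.1 hP₂.1, ?_⟩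
          rw [union_card_split hInter hN₁.1.1.1 hP₂.1.1.1, hN₁.2, hP₂.2, key i]
        have j2 : IsTypedVC (T₁ ⊔ T₂) (A₁ ∪ A₂) (S₁ ∪ S₂) r i (N₁ ∪ N₂) ∧
            ((N₁ ∪ N₂).erase r).card = α i := by
          refine ⟨typedVC_union hInter hS₁ hS₂ hN₁.1 hN₂.1, ?_⟩
          rw [union_card_split hInter hN₁.1.1.1 hN₂.1.1.1, hN₁.2, hN₂.2, key i]
        have := (hU _ j1).trans (hU _ j2).symm
        calc P₂ = (N₁ ∪ P₂) ∩ A₂ := (union_inter_right hInter hN₁.1 hP₂.1).symm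
          _ = (N₁ ∪ N₂) ∩ A₂ := by rw [this]
          _ = N₂ := union_inter_right hInter hN₁.1 hN₂.1
    · rintro ⟨⟨M₁, hM₁, hU₁⟩, ⟨M₂, hM₂, hU₂⟩⟩
      refine ⟨M₁ ∪ M₂, ⟨typedVC_union hInter hS₁ hS₂ hM₁.1 hM₂.1, ?_⟩, ?_⟩
      · rw [union_card_split hInter hM₁.1.1.1 hM₂.1.1.1, hM₁.2, hM₂.2, key i]
      · rintro N ⟨hN, hNcard⟩
        have hsub : N ⊆ A₁ ∪ A₂ := fun x hx => (Finset.mem_sdiff.1 (hN.1.1 hx)).1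
        have t1 := typedVC_inter_left hE₁ hInter hS₂ hr₁ hN
        have t2 := typedVC_inter_right hE₂ hInter hS₁ hr₂ hN
        have g1 := (hc₁ i).2.1 _ t1
        have g2 := (hc₂ i).2.1 _ t2
        have hsplit := erase_card_split hInter hsub
        have hk := key i
        have e1 : ((N ∩ A₁).erase r).card = α₁ i := by omega
        have e2 : ((N ∩ A₂).erase r).card = α₂ i := by omega
        have q1 : N ∩ A₁ = M₁ := hU₁ _ ⟨t1, e1⟩
        have q2 : N ∩ A₂ = M₂ := hU₂ _ ⟨t2, e2⟩
        rw [← q1, ← q2, ← Finset.inter_union_distrib_left,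
          Finset.inter_eq_left.2 hsub]
end
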